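/- The truncated Gaussian activation λ(α) = α + N(α)/Φ(α) tends to 0 as α → −∞. -/

import Mathlib

open Real MeasureTheory Filter

noncomputable def gaussPdf (x : ℝ) : ℝ := Real.exp (-x ^ 2 / 2) / Real.sqrt (2 * Real.pi)

noncomputable def gaussCdf (x : ℝ) : ℝ := ∫ t in Set.Iic x, gaussPdf t

lemma sqrt_two_pi_pos : 0 < Real.sqrt (2 * Real.pi) :=
  Real.sqrt_pos.2 (by positivity)

lemma gaussPdf_pos (x : ℝ) : 0 < gaussPdf x :=
  div_pos (Real.exp_pos _) sqrt_two_pi_pos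

lemma integrable_gaussPdf : Integrable gaussPdf := by
  have h := (integrable_exp_neg_mul_sq (by norm_num : (0:ℝ) < 1/2)).div_const
    (Real.sqrt (2 * Real.pi))
  apply h.congr
  filter_upwards with x
  unfold gaussPdf
  congr 1
  ring

lemma hasDerivAt_gaussPdf (x : ℝ) : HasDerivAt gaussPdf (-x * gaussPdf x) x := by
  have h1 : HasDerivAt (fun x : ℝ => -x ^ 2 / 2) (-x) x := by
    have h0 := ((hasDerivAt_pow 2 x).neg).div_const 2
    refine h0.congr_deriv ?_
    norm_num
    ring
  have h2 := (h1.exp).div_const (Real.sqrt (2 * Real.pi))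
  have h3 : -x * gaussPdf x = Real.exp (-x ^ 2 / 2) * (-x) / Real.sqrt (2 * Real.pi) := by
    unfold gaussPdf; ring
  rw [h3]
  exact h2

lemma tendsto_gaussPdf_atBot : Tendsto gaussPdf atBot (nhds 0) := by
  have hsq : Tendsto (fun x : ℝ => x ^ 2) atBot atTop := by
    have := (tendsto_pow_atTop (by norm_num : (2:ℕ) ≠ 0)).comp
      (tendsto_neg_atBot_atTop (G := ℝ))
    simpa [Function.comp_def, neg_sq] using this
  have h1 : Tendsto (fun x : ℝ => -x ^ 2 / 2) atBot atBot := by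
    apply Tendsto.atBot_div_const (by norm_num : (0:ℝ) < 2)
    exact tendsto_neg_atTop_atBot.comp hsq
  have h2 : Tendsto (fun x : ℝ => Real.exp (-x ^ 2 / 2)) atBot (nhds 0) :=
    Real.tendsto_exp_atBot.comp h1
  have h3 := h2.div_const (Real.sqrt (2 * Real.pi))
  rw [zero_div] at h3
  exact h3

lemma gaussCdf_pos (a : ℝ) : 0 < gaussCdf a := by
  unfold gaussCdf
  rw [setIntegral_pos_iff_support_of_nonneg_ae]
  · have : Function.support gaussPdf = Set.univ := by
      ext x; simp [Function.support, (gaussPdf_pos x).ne']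
    rw [this, Set.univ_inter]
    simp [Real.volume_Iic]
  · filter_upwards with x using (gaussPdf_pos x).le
  · exact integrable_gaussPdf.integrableOn

lemma integrable_neg_mul_gaussPdf : Integrable (fun t : ℝ => -t * gaussPdf t) := by
  have hg := (integrable_exp_neg_mul_sq (by norm_num : (0:ℝ) < 1/4)).div_const
    (Real.sqrt (2 * Real.pi))
  apply Integrable.mono' hg
  · exact (continuous_neg.mul ((Real.continuous_exp.comp (by continuity)).div_const _)).aestronglyMeasurable
  · filter_upwards with t
    have habs : |t| ≤ Real.exp ((1/4) * t ^ 2) := by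
      have h1 : |t| ≤ (1/4) * t ^ 2 + 1 := by nlinarith [sq_abs t, abs_nonneg t, sq_nonneg (|t| - 2)]
      exact h1.trans (by linarith [Real.add_one_le_exp ((1/4) * t ^ 2)])
    have hkey : |t| * Real.exp (-t ^ 2 / 2) ≤ Real.exp (-(1/4) * t ^ 2) := by
      calc |t| * Real.exp (-t ^ 2 / 2)
          ≤ Real.exp ((1/4) * t ^ 2) * Real.exp (-t ^ 2 / 2) :=
            mul_le_mul_of_nonneg_right habs (Real.exp_pos _).le
        _ = Real.exp (-(1/4) * t ^ 2) := by rw [← Real.exp_add]; ring_nf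
    rw [Real.norm_eq_abs, abs_mul, abs_neg]
    unfold gaussPdf
    rw [abs_div, abs_of_nonneg (Real.exp_pos _).le, abs_of_nonneg sqrt_two_pi_pos.le]
    rw [mul_div_assoc', div_le_div_iff_of_pos_right sqrt_two_pi_pos]
    exact hkey

/-- Upper Mills bound: Φ(a) ≤ N(a)/(-a) for a < 0. -/
lemma gaussCdf_le (a : ℝ) (ha : a < 0) : gaussCdf a ≤ gaussPdf a / (-a) := by
  have hFTC : ∫ t in Set.Iic a, -t * gaussPdf t = gaussPdf a := by
    have := integral_Iic_of_hasDerivAt_of_tendsto' (a := a)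
      (f := gaussPdf) (f' := fun t => -t * gaussPdf t)
      (fun x _ => hasDerivAt_gaussPdf x)
      integrable_neg_mul_gaussPdf.integrableOn tendsto_gaussPdf_atBot
    simpa using this
  have hmono : gaussCdf a ≤ ∫ t in Set.Iic a, (-t * gaussPdf t) / (-a) := by
    unfold gaussCdf
    apply setIntegral_mono_on integrable_gaussPdf.integrableOn
      (integrable_neg_mul_gaussPdf.div_const _).integrableOn measurableSet_Iic
    intro t ht
    simp only [Set.mem_Iic] at ht
    rw [le_div_iff₀ (by linarith : (0:ℝ) < -a)]
    have := (gaussPdf_pos t).le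
    nlinarith
  calc gaussCdf a ≤ ∫ t in Set.Iic a, (-t * gaussPdf t) / (-a) := hmono
    _ = (∫ t in Set.Iic a, -t * gaussPdf t) / (-a) := by
        rw [integral_div]
    _ = gaussPdf a / (-a) := by rw [hFTC]

noncomputable def millsAux (t : ℝ) : ℝ := -t / (t ^ 2 + 1) * gaussPdf t

noncomputable def millsAux' (t : ℝ) : ℝ :=
  gaussPdf t * (t ^ 4 + 2 * t ^ 2 - 1) / (t ^ 2 + 1) ^ 2

lemma hasDerivAt_millsAux (t : ℝ) : HasDerivAt millsAux (millsAux' t) t := by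
  have hden : (t ^ 2 + 1 : ℝ) ≠ 0 := by positivity
  have hu : HasDerivAt (fun t : ℝ => -t / (t ^ 2 + 1))
      (((-1) * (t ^ 2 + 1) - (-t) * (2 * t ^ 1)) / (t ^ 2 + 1) ^ 2) t :=
    ((hasDerivAt_id t).neg).div ((hasDerivAt_pow 2 t).add_const 1) hden
  have h := hu.mul (hasDerivAt_gaussPdf t)
  refine h.congr_deriv ?_
  unfold millsAux'
  field_simp
  ring

lemma millsAux'_le (t : ℝ) : millsAux' t ≤ gaussPdf t := by
  unfold millsAux'
  rw [div_le_iff₀ (by positivity : (0:ℝ) < (t ^ 2 + 1) ^ 2)]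
  have := (gaussPdf_pos t).le
  nlinarith

lemma abs_millsAux'_le (t : ℝ) : ‖millsAux' t‖ ≤ gaussPdf t := by
  unfold millsAux'
  rw [Real.norm_eq_abs, abs_div, abs_mul, abs_of_nonneg (gaussPdf_pos t).le,
    abs_of_nonneg (by positivity : (0:ℝ) ≤ (t ^ 2 + 1) ^ 2),
    div_le_iff₀ (by positivity : (0:ℝ) < (t ^ 2 + 1) ^ 2)]
  have h1 := (gaussPdf_pos t).le
  have h2 : |t ^ 4 + 2 * t ^ 2 - 1| ≤ (t ^ 2 + 1) ^ 2 := by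
    rw [abs_le]; constructor <;> nlinarith
  nlinarith [abs_nonneg (t ^ 4 + 2 * t ^ 2 - 1)]

lemma integrable_millsAux' : Integrable millsAux' := by
  apply Integrable.mono' integrable_gaussPdf
  · apply Continuous.aestronglyMeasurable
    unfold millsAux' gaussPdf
    fun_prop (disch := intro x; positivity)
  · filter_upwards with t using abs_millsAux'_le t

lemma tendsto_millsAux_atBot : Tendsto millsAux atBot (nhds 0) := by
  apply squeeze_zero_norm _ tendsto_gaussPdf_atBot
  intro t
  unfold millsAux
  rw [Real.norm_eq_abs, abs_mul, abs_of_nonneg (gaussPdf_pos t).le, abs_div,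
    abs_of_nonneg (by positivity : (0:ℝ) ≤ t ^ 2 + 1), abs_neg]
  have h1 : |t| / (t ^ 2 + 1) ≤ 1 := by
    rw [div_le_one (by positivity)]
    nlinarith [sq_abs t, abs_nonneg t]
  nlinarith [gaussPdf_pos t, abs_nonneg t, (div_nonneg (abs_nonneg t) (by positivity : (0:ℝ) ≤ t ^ 2 + 1))]

/-- Lower Mills bound: Φ(a) ≥ (-a)/(a²+1) · N(a). -/
lemma le_gaussCdf (a : ℝ) : -a / (a ^ 2 + 1) * gaussPdf a ≤ gaussCdf a := by
  have hFTC : ∫ t in Set.Iic a, millsAux' t = millsAux a := by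
    have := integral_Iic_of_hasDerivAt_of_tendsto' (a := a)
      (f := millsAux) (f' := millsAux')
      (fun x _ => hasDerivAt_millsAux x)
      integrable_millsAux'.integrableOn tendsto_millsAux_atBot
    simpa using this
  have hmono : ∫ t in Set.Iic a, millsAux' t ≤ gaussCdf a := by
    unfold gaussCdf
    exact setIntegral_mono integrable_millsAux'.integrableOn
      integrable_gaussPdf.integrableOn millsAux'_le
  rw [hFTC] at hmono
  exact hmono

theorem tg_activation_tendsto_zero_atBot :
    Filter.Tendsto (fun α : ℝ => α + gaussPdf α / gaussCdf α)
      Filter.atBot (nhds 0) := by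
  have hlow : ∀ᶠ a : ℝ in atBot, 0 ≤ a + gaussPdf a / gaussCdf a := by
    filter_upwards [eventually_lt_atBot (0:ℝ)] with a ha
    have hN := gaussPdf_pos a
    have hΦ := gaussCdf_pos a
    have hle := gaussCdf_le a ha
    have : -a ≤ gaussPdf a / gaussCdf a := by
      rw [le_div_iff₀ hΦ]
      calc -a * gaussCdf a ≤ -a * (gaussPdf a / (-a)) := by
            apply mul_le_mul_of_nonneg_left hle (by linarith)
        _ = gaussPdf a := by
            field_simp
            rw [div_self ha.ne]
    linarith
  have hhigh : ∀ᶠ a : ℝ in atBot, a + gaussPdf a / gaussCdf a ≤ -a⁻¹ := by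
    filter_upwards [eventually_lt_atBot (0:ℝ)] with a ha
    have hN := gaussPdf_pos a
    have hΦ := gaussCdf_pos a
    have hle := le_gaussCdf a
    have hpos : (0:ℝ) < -a / (a ^ 2 + 1) * gaussPdf a := by
      apply mul_pos _ hN
      apply div_pos (by linarith) (by positivity)
    have hne : (a ^ 2 + 1 : ℝ) ≠ 0 := by positivity
    have h1 : gaussPdf a / gaussCdf a ≤ (a ^ 2 + 1) / (-a) := by
      rw [div_le_div_iff₀ hΦ (by linarith : (0:ℝ) < -a)]
      calc gaussPdf a * -a = (-a * gaussPdf a / (a ^ 2 + 1)) * (a ^ 2 + 1) := by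
            rw [div_mul_cancel₀ _ hne]; ring
        _ = (-a / (a ^ 2 + 1) * gaussPdf a) * (a ^ 2 + 1) := by ring
        _ ≤ gaussCdf a * (a ^ 2 + 1) := by
            apply mul_le_mul_of_nonneg_right hle (by positivity)
        _ = (a ^ 2 + 1) * gaussCdf a := mul_comm _ _
    have h2 : a + (a ^ 2 + 1) / (-a) = -a⁻¹ := by
      have hne' : (-a) ≠ 0 := neg_ne_zero.2 ha.ne
      rw [← inv_neg, inv_eq_one_div, eq_div_iff hne', add_mul,
        div_mul_cancel₀ _ hne']
      ring
    linarith
  have h0 : Tendsto (fun _ : ℝ => (0:ℝ)) atBot (nhds 0) := tendsto_const_nhds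
  have hinv : Tendsto (fun a : ℝ => -a⁻¹) atBot (nhds 0) := by
    have := tendsto_inv_atTop_zero.comp (tendsto_neg_atBot_atTop (G := ℝ))
    simpa [Function.comp_def, inv_neg] using this
  exact tendsto_of_tendsto_of_tendsto_of_le_of_le' h0 hinv hlow hhigh
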